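/- Let G be a finite simple graph with a Z2-action (generator s) such that G is the edge-disjoint union of two s-invariant spanning trees and no edge is fixed by s. If G has exactly 5 vertices, then G is isomorphic to the wheel graph W5 (with the action matching the standard one fixing the hub). -/

import Mathlib

/-- The wheel graph `W5` on `Fin 5` with hub `0`. -/
def W5 : SimpleGraph (Fin 5) := SimpleGraph.fromEdgeSet
  {s(0,1), s(0,2), s(0,3), s(0,4), s(1,2), s(2,3), s(3,4), s(4,1)}

/-- The involution `v1 ↔ v3`, `v2 ↔ v4`, fixing the hub `0`. -/
def sW5 : Fin 5 ≃ Fin 5 := (Equiv.swap 1 3).trans (Equiv.swap 2 4)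

instance W5.decAdj : DecidableRel W5.Adj := fun a b =>
  decidable_of_iff ((s(a,b) = s(0,1) ∨ s(a,b) = s(0,2) ∨ s(a,b) = s(0,3) ∨ s(a,b) = s(0,4) ∨
      s(a,b) = s(1,2) ∨ s(a,b) = s(2,3) ∨ s(a,b) = s(3,4) ∨ s(a,b) = s(4,1)) ∧ a ≠ b) (by
    simp [W5, SimpleGraph.fromEdgeSet_adj, Set.mem_insert_iff, Set.mem_singleton_iff])

lemma W5_card_edges : W5.edgeFinset.card = 8 := by decide

lemma L2 : ∀ a b : Fin 5, a ≠ b → ¬(sW5 a = a ∧ sW5 b = b) → sW5 a ≠ b → W5.Adj a b := by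
  decide

lemma sW5_invol : ∀ x, sW5 (sW5 x) = x := by decide

def allowedPairs (σ' : Equiv.Perm (Fin 5)) : Finset (Fin 5 × Fin 5) :=
  Finset.univ.filter fun p => p.1 ≠ p.2 ∧ ¬(σ' p.1 = p.1 ∧ σ' p.2 = p.2) ∧ σ' p.1 ≠ p.2

set_option maxHeartbeats 4000000 in
set_option maxRecDepth 10000 in
lemma L1 : ∀ σ' : Equiv.Perm (Fin 5), (∀ a, σ' (σ' a) = a) →
    16 ≤ (allowedPairs σ').card →
    ∃ τ : Equiv.Perm (Fin 5), ∀ x, τ (σ' x) = sW5 (τ x) := by decide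

theorem stmt_14 {V : Type*} [Fintype V] (G : SimpleGraph V) (σ : V ≃ V)
    (hcard : Fintype.card V = 5)
    (hinv : ∀ a, σ (σ a) = a)
    (haut : ∀ a b, G.Adj a b ↔ G.Adj (σ a) (σ b))
    (T1 T2 : SimpleGraph V)
    (hsup : T1 ⊔ T2 = G)
    (hdisj : Disjoint T1.edgeSet T2.edgeSet)
    (hT1 : T1.IsTree) (hT2 : T2.IsTree)
    (hT1inv : ∀ a b, T1.Adj a b → T1.Adj (σ a) (σ b))
    (hT2inv : ∀ a b, T2.Adj a b → T2.Adj (σ a) (σ b))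
    (hnofix : ∀ a b, G.Adj a b → ¬ ((σ a = a ∧ σ b = b) ∨ (σ a = b ∧ σ b = a))) :
    ∃ φ : G ≃g W5, ∀ x, φ (σ x) = sW5 (φ x) := by
  classical
  -- edge counts
  have h1 : T1.edgeFinset.card = 4 := by have := hT1.card_edgeFinset; omega
  have h2 : T2.edgeFinset.card = 4 := by have := hT2.card_edgeFinset; omega
  have hdisjF : Disjoint T1.edgeFinset T2.edgeFinset := by
    simpa [SimpleGraph.edgeFinset, Set.disjoint_toFinset] using hdisj
  have hne : Nonempty V := Fintype.card_pos_iff.mp (by rw [hcard]; norm_num)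
  have hGedges : G.edgeFinset = T1.edgeFinset ∪ T2.edgeFinset := by
    ext x
    simp [SimpleGraph.mem_edgeFinset, ← hsup, SimpleGraph.edgeSet_sup]
  have hG8 : G.edgeFinset.card = 8 := by
    rw [hGedges, Finset.card_union_of_disjoint hdisjF, h1, h2]
  have hpairs : (Finset.univ.filter fun ((x, y) : V × V) => G.Adj x y).card = 16 := by
    have h := G.two_mul_card_edgeFinset
    rw [hG8] at h
    simp only [Finset.filter_congr_decidable] at h ⊢
    omega
  -- transport to Fin 5
  obtain ⟨e₀⟩ : Nonempty (V ≃ Fin 5) := ⟨Fintype.equivFinOfCardEq hcard⟩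
  set σ' : Equiv.Perm (Fin 5) := (e₀.symm.trans σ).trans e₀ with hσ'def
  have hσ'app : ∀ x : V, σ' (e₀ x) = e₀ (σ x) := by
    intro x; simp [hσ'def]
  have hσ'2 : ∀ a, σ' (σ' a) = a := by
    intro a
    simp [hσ'def, hinv]
  have himg : (Finset.univ.filter fun ((x, y) : V × V) => G.Adj x y).image
      (Prod.map e₀ e₀) ⊆ allowedPairs σ' := by
    intro q hq
    obtain ⟨p, hp, rfl⟩ := Finset.mem_image.mp hq
    obtain ⟨a, b⟩ := p
    have hadj : G.Adj a b := (Finset.mem_filter.mp hp).2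
    have hnf := hnofix _ _ hadj
    push_neg at hnf
    simp only [allowedPairs, Finset.mem_filter, Finset.mem_univ, true_and, Prod.map]
    refine ⟨fun h => hadj.ne (e₀.injective h), ?_, ?_⟩
    · intro ⟨ha, hb⟩
      rw [hσ'app, Equiv.apply_eq_iff_eq] at ha hb
      exact hnf.1 ha hb
    · intro h
      rw [hσ'app, Equiv.apply_eq_iff_eq] at h
      have : σ b = a := by rw [← h, hinv]
      exact hnf.2 h this
  have hcard16 : 16 ≤ (allowedPairs σ').card := by
    refine le_trans ?_ (Finset.card_le_card himg)
    rw [Finset.card_image_of_injective _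
      (Prod.map_injective.mpr ⟨e₀.injective, e₀.injective⟩), hpairs]
  obtain ⟨τ, hτ⟩ := L1 σ' hσ'2 hcard16
  set e : V ≃ Fin 5 := e₀.trans τ with hedef
  have heq : ∀ x, e (σ x) = sW5 (e x) := by
    intro x
    have := hτ (e₀ x)
    rw [hσ'app] at this
    simpa [hedef] using this
  have hkey : ∀ x : Fin 5, σ (e.symm x) = e.symm (sW5 x) := by
    intro x
    apply e.injective
    rw [heq]
    simp
  -- the transported graph
  set g2 : SimpleGraph (Fin 5) :=
    { Adj := fun a b => G.Adj (e.symm a) (e.symm b)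
      symm := ⟨fun a b h => G.symm.symm _ _ h⟩
      loopless := ⟨fun a h => G.loopless.irrefl _ h⟩ } with hg2def
  have hg2adj : ∀ a b, g2.Adj a b ↔ G.Adj (e.symm a) (e.symm b) := fun a b => Iff.rfl
  have hle : g2 ≤ W5 := by
    intro a b hab
    rw [hg2adj] at hab
    have hnf := hnofix _ _ hab
    push_neg at hnf
    refine L2 a b ?_ ?_ ?_
    · intro h; exact hab.ne (by rw [h])
    · intro ⟨ha, hb⟩
      apply hnf.1 <;> rw [hkey]
      · rw [ha]
      · rw [hb]
    · intro h
      have h1 : σ (e.symm a) = e.symm b := by rw [hkey, h]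
      have h2 : σ (e.symm b) = e.symm a := by
        rw [hkey, ← h, sW5_invol]
      exact hnf.2 h1 h2
  have hg2pairs : (Finset.univ.filter fun ((x, y) : Fin 5 × Fin 5) => g2.Adj x y) =
      (Finset.univ.filter fun ((x, y) : V × V) => G.Adj x y).image (Prod.map e e) := by
    ext ⟨a, b⟩
    simp only [Finset.mem_filter, Finset.mem_univ, true_and, Finset.mem_image]
    constructor
    · intro h
      exact ⟨(e.symm a, e.symm b), by simpa [hg2adj] using h, by simp [Prod.map]⟩
    · rintro ⟨⟨x, y⟩, hp, hxy⟩
      obtain ⟨rfl, rfl⟩ : e x = a ∧ e y = b := by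
        simpa [Prod.map, Prod.ext_iff] using hxy
      simpa [hg2adj] using hp
  have hg2card : g2.edgeFinset.card = 8 := by
    have h16 : (Finset.univ.filter fun ((x, y) : Fin 5 × Fin 5) => g2.Adj x y).card = 16 := by
      rw [hg2pairs, Finset.card_image_of_injective _
        (Prod.map_injective.mpr ⟨e.injective, e.injective⟩), hpairs]
    have h := g2.two_mul_card_edgeFinset
    simp only [Finset.filter_congr_decidable] at h h16
    rw [h16] at h
    omega
  have hfeq : g2.edgeFinset = W5.edgeFinset := by
    apply Finset.eq_of_subset_of_card_le
    · exact SimpleGraph.edgeFinset_subset_edgeFinset.mpr hle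
    · rw [hg2card, W5_card_edges]
  have hg2W5 : g2 = W5 := by
    rw [← SimpleGraph.edgeFinset_inj]
    exact hfeq
  refine ⟨⟨e, ?_⟩, ?_⟩
  · intro a b
    rw [← hg2W5, hg2adj]
    simp
  · intro x
    exact heq x
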